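/- Quantitative Buckingham theorem, rank-deficient case: With A an m×n real matrix of rank r < n, k := n−r, β ∈ ℝ^m, ε ≥ 0, F ∈ S(A,β,ε), y ∈ ℝⁿ and δ ≥ 0 with ‖Ayᵀ − βᵀ‖_∞ ≤ δ; D := (Aᵀ)†; X the k×n matrix whose rows x₁,…,x_k form a basis of ker(A); πₛ(u) := u^{xₛ}; ψ(w) := exp(X†·log(w)ᵀ); G(w) := F(ψ(w))/ψ(w)^y; M := max_{s,j} |x_{sj}|; K > 1. If v ∈ (ℝ_{>0})ⁿ with K⁻¹ ≤ v_i ≤ K for all i, then |F(v) − G(π₁(v),…,π_k(v))·v^y| ≤ |F(v)|·((1+ε)·K^{mδ‖D‖(nM‖X†‖+1)} − 1). -/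

import Mathlib

open Matrix

/-- `v^y := ∏ i, v i ^ y i` (real powers). -/
noncomputable def ppow {ι : Type*} [Fintype ι] (v y : ι → ℝ) : ℝ := ∏ i, v i ^ y i

/-- The scaled vector `(v₁c^{α₁}, …, vₙc^{αₙ})`, where `αⱼᵀ` are the columns of `A`
and `c^α := ∏ i, c i ^ α i`. -/
noncomputable def scale {m n : ℕ} (A : Matrix (Fin m) (Fin n) ℝ) (c : Fin m → ℝ)
    (v : Fin n → ℝ) : Fin n → ℝ := fun j => v j * ppow c (fun i => A i j)

/-- `F ∈ S(A,β,ε)`: `|F(v₁c^{α₁},…,vₙc^{αₙ}) − F(v)c^β| ≤ ε|F(v)|c^β` for all positive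
`v ∈ ℝⁿ`, `c ∈ ℝ^m`. `S(A,β) := S(A,β,0)`. -/
def memS {m n : ℕ} (A : Matrix (Fin m) (Fin n) ℝ) (β : Fin m → ℝ) (ε : ℝ)
    (F : (Fin n → ℝ) → ℝ) : Prop :=
  ∀ v : Fin n → ℝ, (∀ j, 0 < v j) → ∀ c : Fin m → ℝ, (∀ i, 0 < c i) →
    |F (scale A c v) - F v * ppow c β| ≤ ε * |F v| * ppow c β

lemma ppow_exp {ι : Type*} [Fintype ι] (s y : ι → ℝ) :
    ppow (fun i => Real.exp (s i)) y = Real.exp (∑ i, y i * s i) := by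
  unfold ppow
  rw [Real.exp_sum]
  refine Finset.prod_congr rfl fun i _ => ?_
  rw [Real.rpow_def_of_pos (Real.exp_pos _), Real.log_exp, mul_comm]

lemma ppow_pos_eq {ι : Type*} [Fintype ι] {v : ι → ℝ} (hv : ∀ i, 0 < v i) (y : ι → ℝ) :
    ppow v y = Real.exp (∑ i, y i * Real.log (v i)) := by
  unfold ppow
  rw [Real.exp_sum]
  refine Finset.prod_congr rfl fun i _ => ?_
  rw [Real.rpow_def_of_pos (hv i), mul_comm]

lemma ker_eq_span (m n r k : ℕ) (A : Matrix (Fin m) (Fin n) ℝ)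
    (hr : A.rank = r) (hrn : r < n) (hk : k = n - r)
    (X : Matrix (Fin k) (Fin n) ℝ)
    (hXker : ∀ s, A.mulVec (X s) = 0)
    (hXind : LinearIndependent ℝ (fun s => X s)) :
    LinearMap.ker A.mulVecLin = Submodule.span ℝ (Set.range fun s => X s) := by
  have hle : Submodule.span ℝ (Set.range fun s => X s) ≤ LinearMap.ker A.mulVecLin := by
    rw [Submodule.span_le]
    rintro _ ⟨s, rfl⟩
    simp [LinearMap.mem_ker, Matrix.mulVecLin_apply, hXker s]
  have hker : Module.finrank ℝ (LinearMap.ker A.mulVecLin) = k := by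
    have := LinearMap.finrank_range_add_finrank_ker A.mulVecLin
    rw [Module.finrank_pi, Fintype.card_fin] at this
    have hrank : Module.finrank ℝ (LinearMap.range A.mulVecLin) = r := hr
    omega
  have hspan : Module.finrank ℝ (Submodule.span ℝ (Set.range fun s => X s)) = k := by
    rw [finrank_span_eq_card hXind, Fintype.card_fin]
  exact (Submodule.eq_of_le_of_finrank_le hle (by rw [hker, hspan])).symm

lemma dot_swap {p q : ℕ} (M : Matrix (Fin p) (Fin q) ℝ) (x : Fin q → ℝ) (z : Fin p → ℝ) :
    M.mulVec x ⬝ᵥ z = x ⬝ᵥ Mᵀ.mulVec z := by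
  rw [Matrix.mulVec_transpose, dotProduct_comm, Matrix.dotProduct_mulVec, dotProduct_comm]

lemma proj_fix {m n k : ℕ} (A D : Matrix (Fin m) (Fin n) ℝ)
    (hD1 : Aᵀ * D * Aᵀ = Aᵀ) (hD3 : (Aᵀ * D)ᵀ = Aᵀ * D)
    (X : Matrix (Fin k) (Fin n) ℝ)
    (hspan : LinearMap.ker A.mulVecLin = Submodule.span ℝ (Set.range fun s => X s))
    (ξ : Fin n → ℝ) (hXξ : X.mulVec ξ = 0) :
    (Aᵀ * D).mulVec ξ = ξ := by
  have hP2 : (Aᵀ * D) * (Aᵀ * D) = Aᵀ * D := by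
    rw [← Matrix.mul_assoc, hD1]
  set η := ξ - (Aᵀ * D).mulVec ξ with hη
  have hPη : (Aᵀ * D).mulVec η = 0 := by
    rw [hη, Matrix.mulVec_sub, Matrix.mulVec_mulVec, hP2, sub_self]
  have hAη : A.mulVec η = 0 := by
    rw [← dotProduct_self_eq_zero]
    have e1 : A.mulVec η ⬝ᵥ A.mulVec η = (Aᵀ.mulVec (A.mulVec η)) ⬝ᵥ η := by
      rw [dot_swap, dotProduct_comm]
    have e2 : Aᵀ.mulVec (A.mulVec η) = (Aᵀ * D).mulVec (Aᵀ.mulVec (A.mulVec η)) := by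
      rw [Matrix.mulVec_mulVec, Matrix.mulVec_mulVec, ← Matrix.mul_assoc, hD1]
    rw [e1, e2, dot_swap, hD3, hPη]
    simp
  have hmem : η ∈ Submodule.span ℝ (Set.range fun s => X s) := by
    rw [← hspan, LinearMap.mem_ker, Matrix.mulVecLin_apply, hAη]
  obtain ⟨d, hd⟩ := (Submodule.mem_span_range_iff_exists_fun ℝ).mp hmem
  have hηξ : η ⬝ᵥ ξ = 0 := by
    have : (∑ s, d s • X s) ⬝ᵥ ξ = ∑ s, d s • (X s ⬝ᵥ ξ) := by
      simp only [dotProduct, Finset.sum_apply, Pi.smul_apply, smul_eq_mul,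
        Finset.sum_mul, Finset.mul_sum]
      rw [Finset.sum_comm]
      exact Finset.sum_congr rfl fun j _ => Finset.sum_congr rfl fun s _ => by ring
    rw [← hd, this]
    refine Finset.sum_eq_zero fun s _ => ?_
    have : X s ⬝ᵥ ξ = X.mulVec ξ s := rfl
    rw [this, hXξ]
    simp
  have hηP : η ⬝ᵥ (Aᵀ * D).mulVec ξ = 0 := by
    have : η ⬝ᵥ (Aᵀ * D).mulVec ξ = ((Aᵀ * D)ᵀ.mulVec η) ⬝ᵥ ξ := by
      rw [dot_swap, Matrix.transpose_transpose]
    rw [this, hD3, hPη]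
    simp
  have hη0 : η = 0 := by
    rw [← dotProduct_self_eq_zero]
    calc η ⬝ᵥ η = η ⬝ᵥ ξ - η ⬝ᵥ (Aᵀ * D).mulVec ξ := by rw [hη, dotProduct_sub]
    _ = 0 := by rw [hηξ, hηP, sub_zero]
  have h := sub_eq_zero.mp hη0
  exact h.symm

set_option maxHeartbeats 2000000 in
/-- Quantitative Buckingham theorem, rank-deficient case. `D` is the Moore–Penrose
pseudoinverse of `Aᵀ`, `Xd` that of `X`; the operator norms induced by the
max-norms are `‖D‖ = ⨆ i, ∑ j, |D i j|` and `‖Xd‖ = ⨆ j, ∑ s, |Xd j s|`, and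
`M = max_{s,j} |X s j|`. -/
theorem quantitative_buckingham_rank_deficient (m n r k : ℕ)
    (A : Matrix (Fin m) (Fin n) ℝ)
    (hr : A.rank = r) (hrn : r < n) (hk : k = n - r)
    (β : Fin m → ℝ) (ε : ℝ) (hε : 0 ≤ ε)
    (F : (Fin n → ℝ) → ℝ) (hF : memS A β ε F)
    (y : Fin n → ℝ) (δ : ℝ) (hδ : 0 ≤ δ) (hy : ∀ i, |A.mulVec y i - β i| ≤ δ)
    (D : Matrix (Fin m) (Fin n) ℝ)
    (hD1 : Aᵀ * D * Aᵀ = Aᵀ) (hD2 : D * Aᵀ * D = D)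
    (hD3 : (Aᵀ * D)ᵀ = Aᵀ * D) (hD4 : (D * Aᵀ)ᵀ = D * Aᵀ)
    (X : Matrix (Fin k) (Fin n) ℝ)
    (hXker : ∀ s, A.mulVec (X s) = 0)
    (hXind : LinearIndependent ℝ (fun s => X s))
    (Xd : Matrix (Fin n) (Fin k) ℝ)
    (h1 : X * Xd * X = X) (h2 : Xd * X * Xd = Xd)
    (h3 : (X * Xd)ᵀ = X * Xd) (h4 : (Xd * X)ᵀ = Xd * X)
    (ψ : (Fin k → ℝ) → (Fin n → ℝ))
    (hψ : ∀ w, ψ w = fun j => Real.exp (∑ t, Xd j t * Real.log (w t)))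
    (G : (Fin k → ℝ) → ℝ) (hG : ∀ w, G w = F (ψ w) / ppow (ψ w) y)
    (M : ℝ) (hM : M = ⨆ s, ⨆ j, |X s j|)
    (K : ℝ) (hK : 1 < K)
    (v : Fin n → ℝ) (hv : ∀ i, K⁻¹ ≤ v i ∧ v i ≤ K) :
    |F v - G (fun s => ppow v (X s)) * ppow v y| ≤
      |F v| * ((1 + ε) *
        K ^ ((m : ℝ) * δ * (⨆ i, ∑ j, |D i j|) *
          ((n : ℝ) * M * (⨆ j, ∑ s, |Xd j s|) + 1)) - 1) := by
  have hK0 : (0:ℝ) < K := lt_trans one_pos hK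
  have hvpos : ∀ j, 0 < v j := fun j => lt_of_lt_of_le (inv_pos.mpr hK0) (hv j).1
  set lgK := Real.log K with hlgK_def
  have hlgK : 0 < lgK := Real.log_pos hK
  set L : Fin n → ℝ := fun j => Real.log (v j) with hL_def
  have hLK : ∀ j, |L j| ≤ lgK := by
    intro j
    rw [abs_le]
    constructor
    · rw [hL_def, hlgK_def, ← Real.log_inv]
      exact Real.log_le_log (inv_pos.mpr hK0) (hv j).1
    · exact Real.log_le_log (hvpos j) (hv j).2
  set w : Fin k → ℝ := fun s => ppow v (X s) with hw_def
  have hlogw : ∀ s, Real.log (w s) = (X.mulVec L) s := by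
    intro s
    rw [hw_def]
    simp only
    rw [ppow_pos_eq hvpos, Real.log_exp]
    rfl
  set u : Fin n → ℝ := ψ w with hu_def
  have hu : u = fun j => Real.exp ((Xd * X).mulVec L j) := by
    rw [hu_def, hψ]
    funext j
    congr 1
    rw [← Matrix.mulVec_mulVec]
    exact Finset.sum_congr rfl fun t _ => by rw [hlogw]
  have hupos : ∀ j, 0 < u j := by rw [hu]; intro j; exact Real.exp_pos _
  set ξ : Fin n → ℝ := L - (Xd * X).mulVec L with hξ_def
  have hXξ : X.mulVec ξ = 0 := by
    rw [hξ_def, Matrix.mulVec_sub, Matrix.mulVec_mulVec, ← Matrix.mul_assoc, h1, sub_self]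
  have hspan := ker_eq_span m n r k A hr hrn hk X hXker hXind
  have hproj : (Aᵀ * D).mulVec ξ = ξ := proj_fix A D hD1 hD3 X hspan ξ hXξ
  set t : Fin m → ℝ := D.mulVec ξ with ht_def
  have hAt : Aᵀ.mulVec t = ξ := by
    rw [ht_def, Matrix.mulVec_mulVec]; exact hproj
  -- apply memS with c = exp(-t)
  set b : ℝ := ∑ i, β i * t i with hb_def
  have hscale : scale A (fun i => Real.exp (-(t i))) v = u := by
    funext j
    unfold scale
    rw [ppow_exp (fun i => -(t i)) (fun i => A i j)]
    have e0 : Aᵀ.mulVec t j = ∑ i, A i j * t i := by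
      simp [Matrix.mulVec, dotProduct, Matrix.transpose_apply]
    have e1 : ∑ i, A i j * -(t i) = -(Aᵀ.mulVec t j) := by
      rw [e0, ← Finset.sum_neg_distrib]
      exact Finset.sum_congr rfl fun i _ => by ring
    rw [e1, hAt]
    have e2 : v j = Real.exp (L j) := (Real.exp_log (hvpos j)).symm
    rw [e2, ← Real.exp_add, hu]
    congr 1
    rw [hξ_def]
    simp
  have hppc : ppow (fun i => Real.exp (-(t i))) β = Real.exp (-b) := by
    rw [ppow_exp (fun i => -(t i)) β, hb_def, ← Finset.sum_neg_distrib]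
    congr 1
    exact Finset.sum_congr rfl fun i _ => by ring
  have hmemS := hF v hvpos (fun i => Real.exp (-(t i))) (fun i => Real.exp_pos _)
  rw [hscale, hppc] at hmemS
  have key1 : |F u * Real.exp b - F v| ≤ ε * |F v| := by
    have e : (F u - F v * Real.exp (-b)) * Real.exp b = F u * Real.exp b - F v := by
      rw [sub_mul, mul_assoc, ← Real.exp_add]
      simp
    calc |F u * Real.exp b - F v| = |F u - F v * Real.exp (-b)| * Real.exp b := by
          rw [← e, abs_mul, abs_of_pos (Real.exp_pos b)]
      _ ≤ (ε * |F v| * Real.exp (-b)) * Real.exp b := by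
          exact mul_le_mul_of_nonneg_right hmemS (Real.exp_pos b).le
      _ = ε * |F v| := by rw [mul_assoc, ← Real.exp_add]; simp
  -- value of G w * ppow v y
  set θ : ℝ := ∑ i, (A.mulVec y i - β i) * t i with hθ_def
  have hGval : G w * ppow v y = (F u * Real.exp b) * Real.exp θ := by
    rw [hG w, ← hu_def]
    have hppu : ppow u y = Real.exp (∑ j, y j * (Xd * X).mulVec L j) := by
      rw [hu]; exact ppow_exp _ y
    have hppv : ppow v y = Real.exp (∑ j, y j * L j) := ppow_pos_eq hvpos y
    rw [hppu, hppv]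
    have hsum : ∑ j, y j * L j = (∑ j, y j * (Xd * X).mulVec L j) + (b + θ) := by
      have e1 : y ⬝ᵥ ξ = (A.mulVec y) ⬝ᵥ t := by
        rw [← hAt]
        have := dot_swap Aᵀ t y
        rw [Matrix.transpose_transpose] at this
        rw [dotProduct_comm, this]
        exact dotProduct_comm _ _
      have e2 : y ⬝ᵥ ξ = ∑ j, y j * L j - ∑ j, y j * (Xd * X).mulVec L j := by
        rw [hξ_def, dotProduct_sub]
        rfl
      have e3 : (A.mulVec y) ⬝ᵥ t = b + θ := by
        rw [hb_def, hθ_def, dotProduct, ← Finset.sum_add_distrib]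
        exact Finset.sum_congr rfl fun i _ => by ring
      rw [e2, e3] at e1
      linarith
    rw [hsum, Real.exp_add, Real.exp_add]
    field_simp
  -- bounds
  set SD : ℝ := ⨆ i, ∑ j, |D i j| with hSD_def
  set SXd : ℝ := ⨆ j, ∑ s, |Xd j s| with hSXd_def
  have hM0 : 0 ≤ M := hM ▸ Real.iSup_nonneg fun s => Real.iSup_nonneg fun j => abs_nonneg _
  have hSD0 : 0 ≤ SD := Real.iSup_nonneg fun i => Finset.sum_nonneg fun j _ => abs_nonneg _
  have hSXd0 : 0 ≤ SXd := Real.iSup_nonneg fun j => Finset.sum_nonneg fun s _ => abs_nonneg _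
  have hXM : ∀ s j, |X s j| ≤ M := by
    intro s j
    rw [hM]
    calc |X s j| ≤ ⨆ j', |X s j'| :=
          le_ciSup (f := fun j' => |X s j'|) (Set.Finite.bddAbove (Set.finite_range _)) j
      _ ≤ ⨆ s', ⨆ j', |X s' j'| :=
        le_ciSup (f := fun s' => ⨆ j', |X s' j'|) (Set.Finite.bddAbove (Set.finite_range _)) s
  have hXL : ∀ s, |X.mulVec L s| ≤ (n : ℝ) * M * lgK := by
    intro s
    have e0 : X.mulVec L s = ∑ j, X s j * L j := rfl
    rw [e0]
    calc |∑ j, X s j * L j| ≤ ∑ j, |X s j * L j| := Finset.abs_sum_le_sum_abs _ _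
      _ ≤ ∑ _j : Fin n, M * lgK := by
          refine Finset.sum_le_sum fun j _ => ?_
          rw [abs_mul]
          exact mul_le_mul (hXM s j) (hLK j) (abs_nonneg _) hM0
      _ = (n : ℝ) * M * lgK := by simp [mul_assoc]
  set B : ℝ := ((n : ℝ) * M * SXd + 1) * lgK with hB_def
  have hB0 : 0 ≤ B := by
    have : 0 ≤ (n : ℝ) * M * SXd := by positivity
    rw [hB_def]; nlinarith
  have hξB : ∀ j, |ξ j| ≤ B := by
    intro j
    have e : ξ j = L j - ∑ s, Xd j s * X.mulVec L s := by
      rw [hξ_def]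
      simp only [Pi.sub_apply]
      congr 1
      rw [← Matrix.mulVec_mulVec]
      rfl
    rw [e]
    have h1' : |∑ s, Xd j s * X.mulVec L s| ≤ SXd * ((n : ℝ) * M * lgK) := by
      calc |∑ s, Xd j s * X.mulVec L s| ≤ ∑ s, |Xd j s * X.mulVec L s| :=
            Finset.abs_sum_le_sum_abs _ _
        _ ≤ ∑ s, |Xd j s| * ((n : ℝ) * M * lgK) := by
            refine Finset.sum_le_sum fun s _ => ?_
            rw [abs_mul]
            exact mul_le_mul_of_nonneg_left (hXL s) (abs_nonneg _)
        _ = (∑ s, |Xd j s|) * ((n : ℝ) * M * lgK) := by rw [Finset.sum_mul]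
        _ ≤ SXd * ((n : ℝ) * M * lgK) := by
            refine mul_le_mul_of_nonneg_right ?_ (by positivity)
            rw [hSXd_def]
            exact le_ciSup (f := fun j' => ∑ s, |Xd j' s|)
              (Set.Finite.bddAbove (Set.finite_range _)) j
    calc |L j - ∑ s, Xd j s * X.mulVec L s| ≤ |L j| + |∑ s, Xd j s * X.mulVec L s| :=
          abs_sub _ _
      _ ≤ lgK + SXd * ((n : ℝ) * M * lgK) := add_le_add (hLK j) h1'
      _ = B := by rw [hB_def]; ring
  have htB : ∀ i, |t i| ≤ SD * B := by
    intro i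
    have e : t i = ∑ j, D i j * ξ j := rfl
    rw [e]
    calc |∑ j, D i j * ξ j| ≤ ∑ j, |D i j * ξ j| := Finset.abs_sum_le_sum_abs _ _
      _ ≤ ∑ j, |D i j| * B := by
          refine Finset.sum_le_sum fun j _ => ?_
          rw [abs_mul]
          exact mul_le_mul_of_nonneg_left (hξB j) (abs_nonneg _)
      _ = (∑ j, |D i j|) * B := by rw [Finset.sum_mul]
      _ ≤ SD * B := by
          refine mul_le_mul_of_nonneg_right ?_ hB0
          rw [hSD_def]
          exact le_ciSup (f := fun i' => ∑ j, |D i' j|)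
            (Set.Finite.bddAbove (Set.finite_range _)) i
  set E : ℝ := (m : ℝ) * δ * SD * ((n : ℝ) * M * SXd + 1) with hE_def
  have hE0 : 0 ≤ E := by rw [hE_def]; positivity
  have hθB : |θ| ≤ E * lgK := by
    rw [hθ_def]
    calc |∑ i, (A.mulVec y i - β i) * t i| ≤ ∑ i, |(A.mulVec y i - β i) * t i| :=
          Finset.abs_sum_le_sum_abs _ _
      _ ≤ ∑ _i : Fin m, δ * (SD * B) := by
          refine Finset.sum_le_sum fun i _ => ?_
          rw [abs_mul]
          exact mul_le_mul (hy i) (htB i) (abs_nonneg _) hδ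
      _ = (m : ℝ) * (δ * (SD * B)) := by simp
      _ = E * lgK := by rw [hE_def, hB_def]; ring
  have hKE : K ^ E = Real.exp (E * lgK) := by
    rw [Real.rpow_def_of_pos hK0, hlgK_def, mul_comm]
  have hZ0 : 0 ≤ E * lgK := mul_nonneg hE0 hlgK.le
  have habs1 : |1 - Real.exp θ| ≤ Real.exp (E * lgK) - 1 := by
    rw [abs_sub_comm, abs_le]
    have hθ1 := (abs_le.mp hθB).1
    have hθ2 := (abs_le.mp hθB).2
    constructor
    · have h1' := Real.add_one_le_exp θ
      have h2' := Real.add_one_le_exp (E * lgK)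
      linarith
    · have := Real.exp_le_exp.mpr hθ2
      linarith
  have key2 : |F u * Real.exp b| ≤ (1 + ε) * |F v| := by
    have := abs_sub_abs_le_abs_sub (F u * Real.exp b) (F v)
    linarith [key1]
  -- final assembly
  rw [hGval, hKE]
  have tri : |F v - F u * Real.exp b * Real.exp θ| ≤
      |F v - F u * Real.exp b| + |F u * Real.exp b| * |1 - Real.exp θ| := by
    have e : F v - F u * Real.exp b * Real.exp θ =
        (F v - F u * Real.exp b) + (F u * Real.exp b) * (1 - Real.exp θ) := by ring
    rw [e]
    calc |(F v - F u * Real.exp b) + (F u * Real.exp b) * (1 - Real.exp θ)| ≤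
        |F v - F u * Real.exp b| + |(F u * Real.exp b) * (1 - Real.exp θ)| := abs_add_le _ _
      _ = |F v - F u * Real.exp b| + |F u * Real.exp b| * |1 - Real.exp θ| := by rw [abs_mul]
  have h5 : |F u * Real.exp b| * |1 - Real.exp θ| ≤
      ((1 + ε) * |F v|) * (Real.exp (E * lgK) - 1) := by
    refine mul_le_mul key2 habs1 (abs_nonneg _) (by positivity)
  have h6 : |F v - F u * Real.exp b| ≤ ε * |F v| := by
    rw [abs_sub_comm]; exact key1
  calc |F v - F u * Real.exp b * Real.exp θ| ≤
      ε * |F v| + ((1 + ε) * |F v|) * (Real.exp (E * lgK) - 1) := by linarith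
    _ = |F v| * ((1 + ε) * Real.exp (E * lgK) - 1) := by ring
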